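/- (General Boundary Lemma) Suppose f satisfies (a), (b), (d) (the condition f(0) = 0 is not assumed), and let F(z) = (f(z) − f(0))/(1 − conj(f(0)) · f(z)). Then |f'(b)| ≥ (2/(1 + |F'(0)|)) · (1 − |f(0)|)/(1 + |f(0)|). -/

import Mathlib

open Complex Filter
open Metric Set

section GeneralBoundaryLemmaAux

private lemma gbl_nsq_id (a w : ℂ) :
    Complex.normSq (1 - (starRingEnd ℂ) a * w) - Complex.normSq (w - a)
      = (1 - Complex.normSq a) * (1 - Complex.normSq w) := by
  simp only [Complex.normSq_apply, Complex.sub_re, Complex.sub_im, Complex.mul_re,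
    Complex.mul_im, Complex.one_re, Complex.one_im, Complex.conj_re, Complex.conj_im]
  ring

private lemma gbl_key_mobius {a g w : ℂ} (ha : ‖a‖ < 1) (hg : ‖g‖ ≤ 1)
    (heq : w * (1 - (starRingEnd ℂ) a * g) = g - a) :
    ‖w‖ ≤ 1 ∧
      (1 - ‖a‖ ^ 2) * (1 - ‖g‖ ^ 2) ≤
        (1 - ‖w‖ ^ 2) * (1 + ‖a‖ * ‖g‖) ^ 2 := by
  set D : ℂ := 1 - (starRingEnd ℂ) a * g with hDdef
  have hag : ‖((starRingEnd ℂ) a * g)‖ = ‖a‖ * ‖g‖ := by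
    rw [norm_mul, Complex.norm_conj]
  have hag1 : ‖a‖ * ‖g‖ < 1 := by
    calc ‖a‖ * ‖g‖ ≤ ‖a‖ * 1 :=
          mul_le_mul_of_nonneg_left hg (norm_nonneg a)
    _ < 1 := by simpa using ha
  have hDlow : 1 - ‖a‖ * ‖g‖ ≤ ‖D‖ := by
    have h := norm_sub_norm_le 1 ((starRingEnd ℂ) a * g)
    simpa [hag] using h
  have hDup : ‖D‖ ≤ 1 + ‖a‖ * ‖g‖ := by
    have h := norm_sub_le 1 ((starRingEnd ℂ) a * g)
    simpa [hag] using h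
  have hDpos : 0 < ‖D‖ := lt_of_lt_of_le (by linarith) hDlow
  have hid : Complex.normSq D * (1 - Complex.normSq w)
      = (1 - Complex.normSq a) * (1 - Complex.normSq g) := by
    have h1 : Complex.normSq (w * D) = Complex.normSq (g - a) := by rw [heq]
    rw [Complex.normSq_mul] at h1
    have h2 := gbl_nsq_id a g
    nlinarith [h1, h2]
  have hnsqD : Complex.normSq D = ‖D‖ ^ 2 := (Complex.sq_norm D).symm
  have hDsqpos : 0 < Complex.normSq D := by rw [hnsqD]; positivity
  have hga : (1 - Complex.normSq a) * (1 - Complex.normSq g) ≥ 0 := by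
    have h3 : Complex.normSq a = ‖a‖ ^ 2 := (Complex.sq_norm a).symm
    have h4 : Complex.normSq g = ‖g‖ ^ 2 := (Complex.sq_norm g).symm
    rw [h3, h4]
    have : ‖a‖ ^ 2 ≤ 1 := by nlinarith [norm_nonneg a]
    have h5 : ‖g‖ ^ 2 ≤ 1 := by nlinarith [norm_nonneg g]
    nlinarith
  have hw1 : 1 - Complex.normSq w ≥ 0 := by
    by_contra hcon
    push_neg at hcon
    nlinarith
  have hwabs : ‖w‖ ≤ 1 := by
    have h6 : Complex.normSq w = ‖w‖ ^ 2 := (Complex.sq_norm w).symm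
    nlinarith [norm_nonneg w]
  refine ⟨hwabs, ?_⟩
  have hDle : Complex.normSq D ≤ (1 + ‖a‖ * ‖g‖) ^ 2 := by
    rw [hnsqD]
    have : (0:ℝ) ≤ ‖D‖ := hDpos.le
    nlinarith
  calc (1 - ‖a‖ ^ 2) * (1 - ‖g‖ ^ 2)
      = Complex.normSq D * (1 - Complex.normSq w) := by
        rw [hid, Complex.sq_norm, Complex.sq_norm]
    _ ≤ (1 + ‖a‖ * ‖g‖) ^ 2 * (1 - Complex.normSq w) :=
        mul_le_mul_of_nonneg_right hDle hw1
    _ = (1 - ‖w‖ ^ 2) * (1 + ‖a‖ * ‖g‖) ^ 2 := by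
        rw [Complex.sq_norm]; ring

private lemma gbl_schwarz_le {φ : ℂ → ℂ} (hd : DifferentiableOn ℂ φ (ball 0 1)) (h0 : φ 0 = 0)
    (hbd : ∀ z ∈ ball (0:ℂ) 1, ‖(φ z)‖ ≤ 1) {z : ℂ} (hz : z ∈ ball (0:ℂ) 1) :
    ‖(dslope φ 0 z)‖ ≤ 1 := by
  refine le_of_forall_pos_le_add fun ε hε => ?_
  have hmaps : MapsTo φ (ball 0 1) (ball (φ 0) (1 + ε)) := by
    intro w hw
    rw [mem_ball, h0, dist_zero_right]
    exact lt_of_le_of_lt (hbd w hw) (by linarith)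
  have := Complex.norm_dslope_le_div_of_mapsTo_ball hd (hmaps.mono_right ball_subset_closedBall) hz
  simpa using this

private lemma gbl_schwarz_le' {φ : ℂ → ℂ} (hd : DifferentiableOn ℂ φ (ball 0 1)) (h0 : φ 0 = 0)
    (hbd : ∀ z ∈ ball (0:ℂ) 1, ‖(φ z)‖ ≤ 1) {z : ℂ} (hz : z ∈ ball (0:ℂ) 1) :
    ‖(φ z)‖ ≤ ‖z‖ := by
  rcases eq_or_ne z 0 with rfl | hz0
  · simp [h0]
  · have h1 := gbl_schwarz_le hd h0 hbd hz
    rw [dslope_of_ne _ hz0, slope_def_field, h0, sub_zero, sub_zero, norm_div] at h1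
    have hza : 0 < ‖z‖ := by simpa [norm_pos_iff] using hz0
    rw [div_le_one hza] at h1
    simpa using h1

private lemma gbl_real_step1 {c s u t : ℝ} (hc0 : 0 ≤ c) (hc1 : c ≤ 1) (hs0 : 0 ≤ s)
    (hu0 : 0 ≤ u) (hus : u ≤ s) (ht0 : 0 ≤ t) (ht1 : t ≤ 1)
    (hK : (1 - c^2) * (1 - u^2) ≤ (1 - t^2) * (1 + c*u)^2) : t * (1 + c*s) ≤ s + c := by
  have m1 : 0 ≤ 1 - t^2 := by nlinarith
  have hcu : c*u ≤ c*s := mul_le_mul_of_nonneg_left hus hc0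
  have m2 : (1 + c*u)^2 ≤ (1 + c*s)^2 := by nlinarith [mul_nonneg hc0 hu0, mul_nonneg hc0 hs0]
  have hu2 : u^2 ≤ s^2 := by nlinarith
  have hc2 : c^2 ≤ 1 := by nlinarith
  have m3 : (1 - c^2) * (1 - s^2) ≤ (1 - c^2) * (1 - u^2) :=
    mul_le_mul_of_nonneg_left (by linarith) (by linarith)
  have st1 : (1 - c^2) * (1 - s^2) ≤ (1 - t^2) * (1 + c*s)^2 :=
    le_trans m3 (le_trans hK (mul_le_mul_of_nonneg_left m2 m1))
  have st2 : (t*(1+c*s))^2 ≤ (s+c)^2 := by nlinarith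
  nlinarith [st2, mul_nonneg ht0 (by positivity : (0:ℝ) ≤ 1 + c*s), hs0, hc0]

private lemma gbl_real_step2 {c s t : ℝ} (hc0 : 0 ≤ c) (hs0 : 0 ≤ s) (ht1 : t ≤ 1)
    (hceq : c = 1) : t * (1 + c*s) ≤ s + c := by
  subst hceq
  nlinarith [mul_nonneg hs0 (sub_nonneg.mpr ht1)]

private lemma gbl_real_step3 {A c r t u : ℝ} (hA0 : 0 ≤ A) (hA1 : A < 1) (hc0 : 0 ≤ c)
    (hc1 : c ≤ 1) (hr0 : 0 ≤ r) (hr1 : r < 1) (ht0 : 0 ≤ t) (ht1 : t < 1) (hu0 : 0 ≤ u)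
    (hM : u * (1 + c*r) ≤ r * (r + c))
    (h7 : (1 - A^2) * (1 - u^2) ≤ (1 - t^2) * (1 + A)^2) :
    (1 - A) * ((1 + r) * (1 + 2*c*r + r^2)) * (1 - r)
      ≤ (1 - t) * ((1 + A) * (2 * (1 + c*r)^2)) := by
  have hcr : 0 ≤ c*r := mul_nonneg hc0 hr0
  have e2 : (1 - r^2) * (1 + 2*c*r + r^2) ≤ (1 - u^2) * (1 + c*r)^2 := by
    have hnn : 0 ≤ u * (1 + c*r) := by positivity
    have h1 : (u * (1 + c*r))^2 ≤ (r * (r + c))^2 := pow_le_pow_left₀ hnn hM 2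
    nlinarith [h1]
  have e1 : (1 - A) * (1 - u^2) ≤ (1 - t^2) * (1 + A) := by
    have hApos : 0 < 1 + A := by linarith
    have : ((1 - A) * (1 - u^2)) * (1 + A) ≤ ((1 - t^2) * (1 + A)) * (1 + A) := by
      nlinarith [h7]
    exact le_of_mul_le_mul_right this hApos
  have hu_le1 : u ≤ 1 := by
    have hcrpos : (0:ℝ) < 1 + c*r := by linarith
    have h2 : u * (1 + c*r) ≤ 1 * (1 + c*r) := by nlinarith [hM]
    exact le_of_mul_le_mul_right h2 hcrpos
  have hu1 : u^2 ≤ 1 := by nlinarith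
  have c1 : (1 - A) * ((1 - r^2) * (1 + 2*c*r + r^2)) ≤ (1 - A) * ((1 - u^2) * (1 + c*r)^2) :=
    mul_le_mul_of_nonneg_left e2 (by linarith)
  have c2 : ((1 - A) * (1 - u^2)) * (1 + c*r)^2 ≤ ((1 - t^2) * (1 + A)) * (1 + c*r)^2 :=
    mul_le_mul_of_nonneg_right e1 (by positivity)
  have c3 : ((1 - t^2) * (1 + A)) * (1 + c*r)^2 ≤ ((2 * (1 - t)) * (1 + A)) * (1 + c*r)^2 := by
    have h4 : (1 - t^2) ≤ 2 * (1 - t) := by nlinarith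
    nlinarith [h4, mul_nonneg (by linarith : (0:ℝ) ≤ 1 + A) (sq_nonneg (1 + c*r))]
  nlinarith [c1, c2, c3]

end GeneralBoundaryLemmaAux


/-- **The General Boundary Lemma.** Let `f` be holomorphic on the unit disk with
`|f| < 1` there (not assuming `f 0 = 0`), extending continuously to a boundary point
`b` with `|f b| = 1` and with derivative `fb'` at `b` (as a limit within the disk).
With `F z = (f z - f 0) / (1 - conj (f 0) · f z)`, one has
`|f'(b)| ≥ (2 / (1 + |F'(0)|)) · (1 - |f 0|) / (1 + |f 0|)`. -/
theorem general_boundary_lemma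
    (f F : ℂ → ℂ) (b fb' : ℂ)
    (ha : DifferentiableOn ℂ f {z : ℂ | ‖z‖ < 1})
    (hb : ∀ z : ℂ, ‖z‖ < 1 → ‖(f z)‖ < 1)
    (hbmod : ‖b‖ = 1)
    (hcont : ContinuousWithinAt f ({z : ℂ | ‖z‖ < 1} ∪ {b}) b)
    (hfb : ‖(f b)‖ = 1)
    (hderiv : Tendsto (fun z => (f z - f b) / (z - b))
      (nhdsWithin b {z : ℂ | ‖z‖ < 1}) (nhds fb'))
    (hF : F = fun z => (f z - f 0) / (1 - (starRingEnd ℂ) (f 0) * f z)) :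
    2 / (1 + ‖(deriv F 0)‖) *
        ((1 - ‖(f 0)‖) / (1 + ‖(f 0)‖)) ≤ ‖fb'‖ := by
  subst hF
  have hset : {z : ℂ | ‖z‖ < 1} = ball (0:ℂ) 1 := by
    ext z; simp [Complex.dist_eq]
  rw [hset] at ha hderiv
  set a : ℂ := f 0 with haa
  have hA : ‖a‖ < 1 := hb 0 (by simp)
  have hA0 : 0 ≤ ‖a‖ := norm_nonneg a
  have hden : ∀ z ∈ ball (0:ℂ) 1, (1 - (starRingEnd ℂ) a * f z) ≠ 0 := by
    intro z hz
    have h1 : ‖((starRingEnd ℂ) a * f z)‖ < 1 := by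
      rw [norm_mul, Complex.norm_conj]
      have := hb z (by simpa [Complex.dist_eq] using hz)
      nlinarith [norm_nonneg a, norm_nonneg (f z)]
    intro hcon
    rw [sub_eq_zero] at hcon
    rw [← hcon] at h1
    simp at h1
  set F : ℂ → ℂ := fun z => (f z - a) / (1 - (starRingEnd ℂ) a * f z) with hFdef
  have hF0 : F 0 = 0 := by simp [hFdef, haa]
  have hFdiff : DifferentiableOn ℂ F (ball 0 1) := by
    apply DifferentiableOn.div
    · exact ha.sub (differentiableOn_const a)
    · exact (differentiableOn_const 1).sub ((differentiableOn_const _).mul ha)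
    · exact hden
  have hFeq : ∀ z ∈ ball (0:ℂ) 1, F z * (1 - (starRingEnd ℂ) a * f z) = f z - a := by
    intro z hz
    rw [hFdef]
    exact div_mul_cancel₀ _ (hden z hz)
  have hFkey : ∀ z ∈ ball (0:ℂ) 1, ‖(F z)‖ ≤ 1 ∧
      (1 - ‖a‖ ^ 2) * (1 - ‖(f z)‖ ^ 2) ≤
        (1 - ‖(F z)‖ ^ 2) * (1 + ‖a‖ * ‖(f z)‖) ^ 2 :=
    fun z hz => gbl_key_mobius hA (hb z (by simpa [Complex.dist_eq] using hz)).le (hFeq z hz)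
  set h : ℂ → ℂ := dslope F 0 with hhdef
  have hhdiff : DifferentiableOn ℂ h (ball 0 1) :=
    (differentiableOn_dslope (ball_mem_nhds _ one_pos)).mpr hFdiff
  have hhle : ∀ z ∈ ball (0:ℂ) 1, ‖(h z)‖ ≤ 1 :=
    fun z hz => gbl_schwarz_le hFdiff hF0 (fun w hw => (hFkey w hw).1) hz
  have hh0 : h 0 = deriv F 0 := dslope_same F 0
  set c : ℝ := ‖(deriv F 0)‖ with hcdef
  have hc0 : 0 ≤ c := norm_nonneg _
  have hc1 : c ≤ 1 := by
    have := hhle 0 (by simp)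
    rwa [hh0] at this
  have hFzh : ∀ z : ℂ, z ≠ 0 → F z = z * h z := by
    intro z hz0
    rw [hhdef, dslope_of_ne _ hz0, slope_def_field, hF0, sub_zero, sub_zero]
    field_simp
  -- Refined Schwarz bound for F
  have hM : ∀ z ∈ ball (0:ℂ) 1,
      ‖(F z)‖ * (1 + c * ‖z‖) ≤ ‖z‖ * (‖z‖ + c) := by
    intro z hz
    rcases eq_or_ne z 0 with rfl | hz0
    · simp [hF0]
    have hs0 : 0 ≤ ‖z‖ := norm_nonneg z
    have hs1 : ‖z‖ < 1 := by simpa [Complex.dist_eq] using hz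
    have ht0 : 0 ≤ ‖(h z)‖ := norm_nonneg _
    have ht1 : ‖(h z)‖ ≤ 1 := hhle z hz
    have hhz : ‖(h z)‖ * (1 + c * ‖z‖) ≤ ‖z‖ + c := by
      rcases hc1.lt_or_eq with hclt | hceq
      · have hhc : ‖(h 0)‖ = c := by rw [hh0]
        have hdenG : ∀ w ∈ ball (0:ℂ) 1, (1 - (starRingEnd ℂ) (h 0) * h w) ≠ 0 := by
          intro w hw
          have h1 : ‖((starRingEnd ℂ) (h 0) * h w)‖ < 1 := by
            rw [norm_mul, Complex.norm_conj, hhc]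
            nlinarith [norm_nonneg (h w), hhle w hw]
          intro hcon
          rw [sub_eq_zero] at hcon
          rw [← hcon] at h1
          simp at h1
        set G : ℂ → ℂ := fun w => (h w - h 0) / (1 - (starRingEnd ℂ) (h 0) * h w) with hGdef
        have hG0 : G 0 = 0 := by simp [hGdef]
        have hGdiff : DifferentiableOn ℂ G (ball 0 1) := by
          apply DifferentiableOn.div
          · exact hhdiff.sub (differentiableOn_const _)
          · exact (differentiableOn_const 1).sub ((differentiableOn_const _).mul hhdiff)
          · exact hdenG
        have hGeq : ∀ w ∈ ball (0:ℂ) 1,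
            G w * (1 - (starRingEnd ℂ) (h 0) * h w) = h w - h 0 := by
          intro w hw
          rw [hGdef]
          exact div_mul_cancel₀ _ (hdenG w hw)
        have hGle : ∀ w ∈ ball (0:ℂ) 1, ‖(G w)‖ ≤ 1 := by
          intro w hw
          exact (gbl_key_mobius (by rw [hhc]; exact hclt) (hhle w hw) (hGeq w hw)).1
        have hGz : ‖(G z)‖ ≤ ‖z‖ := gbl_schwarz_le' hGdiff hG0 hGle hz
        have hinv : h z * (1 - (starRingEnd ℂ) (-(h 0)) * G z) = G z - -(h 0) := by
          have hge := hGeq z hz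
          rw [map_neg]
          linear_combination -hge
        have hneglt : ‖(-(h 0))‖ < 1 := by
          rw [norm_neg, hhc]; exact hclt
        obtain ⟨ht1', hK⟩ := gbl_key_mobius hneglt (hGle z hz) hinv
        rw [norm_neg, hhc] at hK
        exact gbl_real_step1 hc0 hc1 hs0 (norm_nonneg (G z)) hGz ht0 ht1 hK
      · exact gbl_real_step2 hc0 hs0 ht1 hceq
    calc ‖(F z)‖ * (1 + c * ‖z‖)
        = ‖z‖ * (‖(h z)‖ * (1 + c * ‖z‖)) := by
          rw [hFzh z hz0, norm_mul]; ring
      _ ≤ ‖z‖ * (‖z‖ + c) := mul_le_mul_of_nonneg_left hhz hs0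
  -- step 7 : lower bound for 1 - |f z|² in terms of 1 - |F z|²
  have h7 : ∀ z ∈ ball (0:ℂ) 1,
      (1 - ‖a‖ ^ 2) * (1 - ‖(F z)‖ ^ 2) ≤
        (1 - ‖(f z)‖ ^ 2) * (1 + ‖a‖) ^ 2 := by
    intro z hz
    have hfz : ‖(f z)‖ < 1 := hb z (by simpa [Complex.dist_eq] using hz)
    have hinv2 : f z * (1 - (starRingEnd ℂ) (-a) * F z) = F z - -a := by
      have hge := hFeq z hz
      rw [map_neg]
      linear_combination -hge
    have hnegA : ‖(-a)‖ < 1 := by rwa [norm_neg]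
    obtain ⟨_, hK⟩ := gbl_key_mobius hnegA (hFkey z hz).1 hinv2
    rw [norm_neg] at hK
    have hFz1 : ‖(F z)‖ ≤ 1 := (hFkey z hz).1
    have hfz2 : 0 ≤ 1 - ‖(f z)‖ ^ 2 := by
      nlinarith [norm_nonneg (f z)]
    have hm : (1 + ‖a‖ * ‖(F z)‖) ^ 2 ≤ (1 + ‖a‖) ^ 2 := by
      nlinarith [mul_le_mul_of_nonneg_left hFz1 hA0, mul_nonneg hA0 (norm_nonneg (F z))]
    calc (1 - ‖a‖ ^ 2) * (1 - ‖(F z)‖ ^ 2)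
        ≤ (1 - ‖(f z)‖ ^ 2) * (1 + ‖a‖ * ‖(F z)‖) ^ 2 := hK
      _ ≤ (1 - ‖(f z)‖ ^ 2) * (1 + ‖a‖) ^ 2 :=
          mul_le_mul_of_nonneg_left hm hfz2
  -- the radial functions
  set A : ℝ := ‖a‖ with hAdef
  set q : ℝ → ℝ := fun r => ‖((f ((r:ℂ)*b) - f b) / ((r:ℂ)*b - b))‖ with hqdef
  set gfun : ℝ → ℝ :=
    fun r => ((1 - A) * ((1 + r) * (1 + 2*c*r + r^2))) / ((1 + A) * (2 * (1 + c*r)^2))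
    with hgdef
  have hrad : ∀ r ∈ Ico (0:ℝ) 1, gfun r ≤ q r := by
    rintro r ⟨hr0, hr1⟩
    set z : ℂ := (r:ℂ)*b with hzdef
    have hzb : ‖z‖ = r := by
      rw [hzdef, norm_mul, Complex.norm_real, Real.norm_eq_abs, hbmod, mul_one, _root_.abs_of_nonneg hr0]
    have hzball : z ∈ ball (0:ℂ) 1 := by
      simp only [mem_ball, Complex.dist_eq, sub_zero]
      rw [hzb]; exact hr1
    have hfz : ‖(f z)‖ < 1 := hb z (by rwa [hzb])
    have hzbd : ‖(z - b)‖ = 1 - r := by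
      have : z - b = ((r - 1 : ℝ) : ℂ) * b := by rw [hzdef]; push_cast; ring
      rw [this, norm_mul, Complex.norm_real, Real.norm_eq_abs, hbmod, mul_one, _root_.abs_of_nonpos (by linarith)]
      ring
    have hnum : 1 - ‖(f z)‖ ≤ ‖(f z - f b)‖ := by
      have hle := norm_sub_norm_le (f b) (f z)
      rw [hfb] at hle
      calc 1 - ‖(f z)‖ ≤ ‖(f b - f z)‖ := hle
        _ = ‖(f z - f b)‖ := norm_sub_rev _ _
    have hq : (1 - ‖(f z)‖) / (1 - r) ≤ q r := by
      rw [hqdef]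
      simp only
      rw [norm_div, hzbd]
      gcongr
    refine le_trans ?_ hq
    have hr1' : 0 < 1 - r := by linarith
    have hApos : 0 < (1 + A) * (2 * (1 + c*r)^2) := by positivity
    rw [hgdef]
    simp only
    rw [div_le_div_iff₀ hApos hr1']
    have hMr := hM z hzball
    rw [hzb] at hMr
    have h7r := h7 z hzball
    exact gbl_real_step3 hA0 hA hc0 hc1 hr0 hr1 (norm_nonneg (f z)) hfz
      (norm_nonneg (F z)) hMr h7r
  -- the path limits
  have hpath : Tendsto (fun r : ℝ => (r:ℂ)*b) (nhdsWithin 1 (Iio 1)) (nhdsWithin b (ball 0 1)) := by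
    rw [tendsto_nhdsWithin_iff]
    constructor
    · have : Tendsto (fun r : ℝ => (r:ℂ)*b) (nhds 1) (nhds ((1:ℂ)*b)) :=
        (Complex.continuous_ofReal.mul continuous_const).tendsto 1 |>.congr (fun _ => rfl)
      simpa using this.mono_left nhdsWithin_le_nhds
    · filter_upwards [Ioo_mem_nhdsLT_of_mem (⟨zero_lt_one, le_rfl⟩ : (1:ℝ) ∈ Ioc 0 1)]
        with r hr
      simp only [mem_ball, Complex.dist_eq, sub_zero, norm_mul, Complex.norm_real, Real.norm_eq_abs, hbmod,
        mul_one]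
      rw [_root_.abs_of_nonneg hr.1.le]
      exact hr.2
  have htq : Tendsto q (nhdsWithin 1 (Iio 1)) (nhds (‖fb'‖)) :=
    (continuous_norm.tendsto fb').comp (hderiv.comp hpath)
  have hgval : gfun 1 = 2 / (1 + c) * ((1 - A) / (1 + A)) := by
    rw [hgdef]
    simp only
    have h1 : (0:ℝ) < 1 + c := by linarith
    have h2 : (0:ℝ) < 1 + A := by linarith
    field_simp
    ring
  have htg : Tendsto gfun (nhdsWithin 1 (Iio 1)) (nhds (gfun 1)) := by
    have hcont2 : ContinuousAt gfun 1 := by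
      rw [hgdef]
      apply ContinuousAt.div
      · fun_prop
      · fun_prop
      · positivity
    exact hcont2.continuousWithinAt
  have hfinal : gfun 1 ≤ ‖fb'‖ := by
    refine le_of_tendsto_of_tendsto htg htq ?_
    filter_upwards [Ioo_mem_nhdsLT_of_mem (⟨zero_lt_one, le_rfl⟩ : (1:ℝ) ∈ Ioc 0 1)]
      with r hr
    exact hrad r ⟨hr.1.le, hr.2⟩
  rw [hgval] at hfinal
  exact hfinal
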